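/- Let p > 0 with 2/p ∈ ℕ, ω ≥ 0, and φ ∈ [0,2π). Then ∫₀^r τ·𝒥_{0,φ}^{[p]}(τ) dτ = r·𝒥_{1,φ}^{[p]}(r) for all r ≥ 0. -/

import Mathlib

/-- The one-variable generalized Bessel function `𝒥_{ω,φ}^{[p]}(r)`, via its series. -/
noncomputable def calJ (p ω φ r : ℝ) : ℝ :=
  ((2 / p) ^ 2 / Real.Gamma (1 / p) ^ 2) *
    ∑' k : ℕ, (p ^ (2 * k) * (-1 : ℝ) ^ k / Real.Gamma ((2 / p) * ((k : ℝ) + 1) + ω)) *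
      (r / p) ^ (2 * (k : ℝ) + ω) *
      ∑ n ∈ Finset.range (k + 1),
        Real.Gamma ((2 * (n : ℝ) + 1) / p) * Real.Gamma ((2 * ((k - n : ℕ) : ℝ) + 1) / p) /
            ((Nat.factorial (2 * n) : ℝ) * (Nat.factorial (2 * (k - n)) : ℝ)) *
          (|Real.cos φ| ^ (4 * (n : ℝ) / p) * |Real.sin φ| ^ (4 * ((k - n : ℕ) : ℝ) / p))

lemma gamma_mul_le {a b : ℝ} (ha : 1 ≤ a) (hb : 1 ≤ b) :
    Real.Gamma a * Real.Gamma b ≤ Real.Gamma (a + b) := by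
  have ha0 : (0:ℝ) < a := lt_of_lt_of_le one_pos ha
  have hb0 : (0:ℝ) < b := lt_of_lt_of_le one_pos hb
  have h := Complex.Gamma_mul_Gamma_eq_betaIntegral (s := (a:ℂ)) (t := (b:ℂ))
    (by simpa using ha0) (by simpa using hb0)
  have hB : ‖Complex.betaIntegral a b‖ ≤ 1 := by
    rw [Complex.betaIntegral]
    have hb1 : ({(1:ℝ)}ᶜ : Set ℝ) ∈ MeasureTheory.ae MeasureTheory.volume :=
      MeasureTheory.compl_mem_ae_iff.mpr (MeasureTheory.measure_singleton 1)
    have := intervalIntegral.norm_integral_le_of_norm_le_const_ae (C := 1) (a := (0:ℝ)) (b := 1)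
      (f := fun x : ℝ => (x:ℂ) ^ ((a:ℂ)-1) * ((1:ℂ)-x) ^ ((b:ℂ)-1)) ?_
    · simpa using this
    · filter_upwards [hb1] with x hx1 hx
      rw [Set.uIoc_of_le (by norm_num : (0:ℝ) ≤ 1)] at hx
      have hx0 : 0 < x := hx.1
      have hxlt : x < 1 := lt_of_le_of_ne hx.2 hx1
      have h1x : 0 < 1 - x := by linarith
      rw [norm_mul]
      have e1 : ‖(x:ℂ) ^ ((a:ℂ)-1)‖ = x ^ (a-1) := by
        rw [Complex.norm_cpow_eq_rpow_re_of_pos hx0]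
        norm_num
      have e2 : ‖((1:ℂ)-x) ^ ((b:ℂ)-1)‖ = (1-x) ^ (b-1) := by
        have : ((1:ℂ) - x) = ((1 - x : ℝ) : ℂ) := by push_cast; ring
        rw [this, Complex.norm_cpow_eq_rpow_re_of_pos h1x]
        norm_num
      rw [e1, e2]
      have l1 : x ^ (a-1) ≤ 1 := Real.rpow_le_one hx0.le hxlt.le (by linarith)
      have l2 : (1-x) ^ (b-1) ≤ 1 := Real.rpow_le_one h1x.le (by linarith) (by linarith)
      calc x ^ (a-1) * (1-x) ^ (b-1) ≤ 1 * 1 := by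
            exact mul_le_mul l1 l2 (Real.rpow_nonneg h1x.le _) zero_le_one
        _ = 1 := by norm_num
  have hGab : (0:ℝ) < Real.Gamma (a+b) := Real.Gamma_pos_of_pos (by linarith)
  have hGa : (0:ℝ) < Real.Gamma a := Real.Gamma_pos_of_pos ha0
  have hGb : (0:ℝ) < Real.Gamma b := Real.Gamma_pos_of_pos hb0
  have key : Real.Gamma a * Real.Gamma b
      = Real.Gamma (a+b) * ‖Complex.betaIntegral a b‖ := by
    have := congrArg norm h
    rw [norm_mul, norm_mul, ← Complex.ofReal_add, Complex.Gamma_ofReal, Complex.Gamma_ofReal,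
      Complex.Gamma_ofReal, Complex.norm_real, Complex.norm_real, Complex.norm_real,
      Real.norm_eq_abs, Real.norm_eq_abs, Real.norm_eq_abs,
      abs_of_pos hGa, abs_of_pos hGb, abs_of_pos hGab] at this
    exact this
  rw [key]
  exact mul_le_of_le_one_right hGab.le hB


lemma gamma_mul_le' {a b : ℝ} (ha : 1/2 ≤ a) (hb : 1/2 ≤ b) :
    Real.Gamma a * Real.Gamma b ≤ 4 * ((a+b+1) * (a+b)) * Real.Gamma (a+b) := by
  have ha0 : (0:ℝ) < a := by linarith
  have hb0 : (0:ℝ) < b := by linarith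
  have h1 : Real.Gamma (a+1) * Real.Gamma (b+1) ≤ Real.Gamma (a+1+(b+1)) :=
    gamma_mul_le (by linarith) (by linarith)
  rw [Real.Gamma_add_one ha0.ne', Real.Gamma_add_one hb0.ne'] at h1
  have e : Real.Gamma (a+1+(b+1)) = (a+b+1) * ((a+b) * Real.Gamma (a+b)) := by
    have e1 : a+1+(b+1) = (a+b+1) + 1 := by ring
    rw [e1, Real.Gamma_add_one (by positivity), Real.Gamma_add_one (by positivity)]
  rw [e] at h1
  have hGa : (0:ℝ) < Real.Gamma a := Real.Gamma_pos_of_pos ha0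
  have hGb : (0:ℝ) < Real.Gamma b := Real.Gamma_pos_of_pos hb0
  have hab : (1:ℝ)/4 ≤ a * b := by nlinarith
  nlinarith [h1, hab, mul_pos hGa hGb]


lemma choose_sum_le (k : ℕ) :
    ∑ n ∈ Finset.range (k+1), ((2*k).choose (2*n)) ≤ 4^k := by
  have hsub : (Finset.range (k+1)).image (fun n => 2*n) ⊆ Finset.range (2*k+1) := by
    intro j hj
    simp only [Finset.mem_image, Finset.mem_range] at hj ⊢
    obtain ⟨n, hn, rfl⟩ := hj
    omega
  have hinj : Set.InjOn (fun n => 2*n) (Finset.range (k+1)) := fun a _ b _ h => by simp only at h; omega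
  calc ∑ n ∈ Finset.range (k+1), ((2*k).choose (2*n))
      = ∑ j ∈ (Finset.range (k+1)).image (fun n => 2*n), ((2*k).choose j) := by
        rw [Finset.sum_image (fun a ha b hb h => hinj ha hb h)]
    _ ≤ ∑ j ∈ Finset.range (2*k+1), ((2*k).choose j) :=
        Finset.sum_le_sum_of_subset hsub
    _ = 2^(2*k) := by
        have := Nat.sum_range_choose (2*k)
        omega
    _ = 4^k := by rw [pow_mul]; norm_num

lemma sum_inv_factorial_le (k : ℕ) :
    ∑ n ∈ Finset.range (k+1), ((1:ℝ) / ((Nat.factorial (2*n) : ℝ) * (Nat.factorial (2*(k-n)) : ℝ)))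
      ≤ 4^k / (Nat.factorial (2*k) : ℝ) := by
  have h1 : ∀ n ∈ Finset.range (k+1),
      ((1:ℝ) / ((Nat.factorial (2*n) : ℝ) * (Nat.factorial (2*(k-n)) : ℝ)))
        = ((2*k).choose (2*n) : ℝ) / (Nat.factorial (2*k) : ℝ) := by
    intro n hn
    have hnk : n ≤ k := Nat.lt_succ_iff.mp (Finset.mem_range.mp hn)
    have h2 : 2*n ≤ 2*k := by omega
    have key : (2*k).choose (2*n) * (2*n).factorial * (2*k - 2*n).factorial
        = (2*k).factorial := Nat.choose_mul_factorial_mul_factorial h2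
    have e : 2*k - 2*n = 2*(k-n) := by omega
    rw [e] at key
    have keyR : ((2*k).choose (2*n) : ℝ) * (Nat.factorial (2*n) : ℝ) * (Nat.factorial (2*(k-n)) : ℝ)
        = (Nat.factorial (2*k) : ℝ) := by exact_mod_cast congrArg Nat.cast key
    have f1 : (0:ℝ) < (Nat.factorial (2*n) : ℝ) := by exact_mod_cast Nat.factorial_pos _
    have f2 : (0:ℝ) < (Nat.factorial (2*(k-n)) : ℝ) := by exact_mod_cast Nat.factorial_pos _
    have f3 : (0:ℝ) < (Nat.factorial (2*k) : ℝ) := by exact_mod_cast Nat.factorial_pos _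
    field_simp
    linarith [keyR]
  rw [Finset.sum_congr rfl h1, ← Finset.sum_div]
  have f3 : (0:ℝ) < (Nat.factorial (2*k) : ℝ) := by exact_mod_cast Nat.factorial_pos _
  have hc : (∑ n ∈ Finset.range (k+1), (((2*k).choose (2*n)) : ℝ)) ≤ 4^k := by
    exact_mod_cast choose_sum_le k
  exact (div_le_div_iff_of_pos_right f3).mpr hc

lemma sq_succ_le_four_pow (k : ℕ) : ((k:ℝ)+1)^2 ≤ 4^k := by
  induction k with
  | zero => norm_num
  | succ n ih =>
    push_cast
    have h4 : (4:ℝ)^(n+1) = 4 * 4^n := by ring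
    rw [h4]
    push_cast at ih
    have hn : (0:ℝ) ≤ (n:ℝ) := Nat.cast_nonneg n
    nlinarith [ih]

lemma summable_even_exp (x : ℝ) : Summable (fun k : ℕ => x^(2*k) / (Nat.factorial (2*k) : ℝ)) := by
  have hinj : Function.Injective (fun n : ℕ => 2*n) := fun a b h => by simp only at h; omega
  have h := (Real.summable_pow_div_factorial |x|).comp_injective hinj
  refine h.congr fun k => ?_
  simp only [Function.comp]
  congr 1
  rw [pow_mul, pow_mul, sq_abs]

/-- The inner finite sum appearing in `calJ`. -/
noncomputable def Sk (p φ : ℝ) (k : ℕ) : ℝ :=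
  ∑ n ∈ Finset.range (k + 1),
    Real.Gamma ((2 * (n : ℝ) + 1) / p) * Real.Gamma ((2 * ((k - n : ℕ) : ℝ) + 1) / p) /
        ((Nat.factorial (2 * n) : ℝ) * (Nat.factorial (2 * (k - n)) : ℝ)) *
      (|Real.cos φ| ^ (4 * (n : ℝ) / p) * |Real.sin φ| ^ (4 * ((k - n : ℕ) : ℝ) / p))

lemma Sk_nonneg {p : ℝ} (hp : 0 < p) (φ : ℝ) (k : ℕ) : 0 ≤ Sk p φ k := by
  refine Finset.sum_nonneg fun n _ => ?_
  have h1 : 0 < Real.Gamma ((2 * (n : ℝ) + 1) / p) :=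
    Real.Gamma_pos_of_pos (by positivity)
  have h2 : 0 < Real.Gamma ((2 * ((k - n : ℕ) : ℝ) + 1) / p) :=
    Real.Gamma_pos_of_pos (by positivity)
  have f1 : (0:ℝ) < (Nat.factorial (2*n) : ℝ) := by exact_mod_cast Nat.factorial_pos _
  have f2 : (0:ℝ) < (Nat.factorial (2*(k-n)) : ℝ) := by exact_mod_cast Nat.factorial_pos _
  have c1 : (0:ℝ) ≤ |Real.cos φ| ^ (4 * (n : ℝ) / p) := Real.rpow_nonneg (abs_nonneg _) _
  have c2 : (0:ℝ) ≤ |Real.sin φ| ^ (4 * ((k - n : ℕ) : ℝ) / p) := Real.rpow_nonneg (abs_nonneg _) _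
  positivity

lemma Sk_le {p : ℝ} (hp : 0 < p) (hp2 : p ≤ 2) (φ : ℝ) (k : ℕ) :
    Sk p φ k ≤ 4*((2/p)*((k:ℝ)+1)+1)*((2/p)*((k:ℝ)+1)) * Real.Gamma ((2/p)*((k:ℝ)+1))
      * (4^k / (Nat.factorial (2*k) : ℝ)) := by
  have hpinv : (1:ℝ)/2 ≤ 1/p := by
    rw [div_le_div_iff₀ (by norm_num) hp]; linarith
  have hGpos : 0 < Real.Gamma ((2/p)*((k:ℝ)+1)) := Real.Gamma_pos_of_pos (by positivity)
  set M : ℝ := 4*((2/p)*((k:ℝ)+1)+1)*((2/p)*((k:ℝ)+1)) * Real.Gamma ((2/p)*((k:ℝ)+1)) with hM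
  have hM0 : 0 ≤ M := by positivity
  have hterm : ∀ n ∈ Finset.range (k+1),
      Real.Gamma ((2 * (n : ℝ) + 1) / p) * Real.Gamma ((2 * ((k - n : ℕ) : ℝ) + 1) / p) /
        ((Nat.factorial (2 * n) : ℝ) * (Nat.factorial (2 * (k - n)) : ℝ)) *
      (|Real.cos φ| ^ (4 * (n : ℝ) / p) * |Real.sin φ| ^ (4 * ((k - n : ℕ) : ℝ) / p))
      ≤ M * ((1:ℝ) / ((Nat.factorial (2*n) : ℝ) * (Nat.factorial (2*(k-n)) : ℝ))) := by
    intro n hn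
    have hnk : n ≤ k := Nat.lt_succ_iff.mp (Finset.mem_range.mp hn)
    set a : ℝ := (2 * (n : ℝ) + 1) / p
    set b : ℝ := (2 * ((k - n : ℕ) : ℝ) + 1) / p
    have ha : 1/2 ≤ a := le_trans hpinv (by
      rw [div_le_div_iff₀ hp hp]
      nlinarith [Nat.cast_nonneg (α := ℝ) n])
    have hb : 1/2 ≤ b := le_trans hpinv (by
      rw [div_le_div_iff₀ hp hp]
      nlinarith [Nat.cast_nonneg (α := ℝ) (k - n)])
    have hcast : ((k - n : ℕ) : ℝ) = (k:ℝ) - (n:ℝ) := by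
      exact Nat.cast_sub hnk
    have hab : a + b = (2/p)*((k:ℝ)+1) := by
      simp only [a, b, hcast]; field_simp; ring
    have f1 : (0:ℝ) < (Nat.factorial (2*n) : ℝ) := by exact_mod_cast Nat.factorial_pos _
    have f2 : (0:ℝ) < (Nat.factorial (2*(k-n)) : ℝ) := by exact_mod_cast Nat.factorial_pos _
    have hGa : 0 < Real.Gamma a := Real.Gamma_pos_of_pos (by linarith)
    have hGb : 0 < Real.Gamma b := Real.Gamma_pos_of_pos (by linarith)
    have hcs : |Real.cos φ| ^ (4 * (n : ℝ) / p) * |Real.sin φ| ^ (4 * ((k - n : ℕ) : ℝ) / p) ≤ 1 := by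
      have c1 : |Real.cos φ| ^ (4 * (n : ℝ) / p) ≤ 1 :=
        Real.rpow_le_one (abs_nonneg _) (Real.abs_cos_le_one φ) (by positivity)
      have c2 : |Real.sin φ| ^ (4 * ((k - n : ℕ) : ℝ) / p) ≤ 1 :=
        Real.rpow_le_one (abs_nonneg _) (Real.abs_sin_le_one φ) (by positivity)
      have c2' : (0:ℝ) ≤ |Real.sin φ| ^ (4 * ((k - n : ℕ) : ℝ) / p) := Real.rpow_nonneg (abs_nonneg _) _
      nlinarith [Real.rpow_nonneg (abs_nonneg (Real.cos φ)) (4 * (n : ℝ) / p)]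
    have hcs0 : (0:ℝ) ≤ |Real.cos φ| ^ (4 * (n : ℝ) / p) * |Real.sin φ| ^ (4 * ((k - n : ℕ) : ℝ) / p) :=
      mul_nonneg (Real.rpow_nonneg (abs_nonneg _) _) (Real.rpow_nonneg (abs_nonneg _) _)
    calc Real.Gamma a * Real.Gamma b / ((Nat.factorial (2*n) : ℝ) * (Nat.factorial (2*(k-n)) : ℝ)) *
          (|Real.cos φ| ^ (4 * (n : ℝ) / p) * |Real.sin φ| ^ (4 * ((k - n : ℕ) : ℝ) / p))
        ≤ Real.Gamma a * Real.Gamma b / ((Nat.factorial (2*n) : ℝ) * (Nat.factorial (2*(k-n)) : ℝ)) * 1 := by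
          apply mul_le_mul_of_nonneg_left hcs (by positivity)
      _ = Real.Gamma a * Real.Gamma b / ((Nat.factorial (2*n) : ℝ) * (Nat.factorial (2*(k-n)) : ℝ)) :=
          mul_one _
      _ ≤ M / ((Nat.factorial (2*n) : ℝ) * (Nat.factorial (2*(k-n)) : ℝ)) := by
          have := gamma_mul_le' ha hb
          rw [hab] at this
          have hden : (0:ℝ) < (Nat.factorial (2*n) : ℝ) * (Nat.factorial (2*(k-n)) : ℝ) :=
            mul_pos f1 f2
          rw [div_le_div_iff₀ hden hden, hM]
          nlinarith [this, hden]
      _ = M * ((1:ℝ) / ((Nat.factorial (2*n) : ℝ) * (Nat.factorial (2*(k-n)) : ℝ))) := by ring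
  calc Sk p φ k ≤ ∑ n ∈ Finset.range (k+1),
        M * ((1:ℝ) / ((Nat.factorial (2*n) : ℝ) * (Nat.factorial (2*(k-n)) : ℝ))) :=
        Finset.sum_le_sum hterm
    _ = M * ∑ n ∈ Finset.range (k+1),
        ((1:ℝ) / ((Nat.factorial (2*n) : ℝ) * (Nat.factorial (2*(k-n)) : ℝ))) := by
        rw [Finset.mul_sum]
    _ ≤ M * (4^k / (Nat.factorial (2*k) : ℝ)) :=
        mul_le_mul_of_nonneg_left (sum_inv_factorial_le k) hM0



theorem calJ_integral_zero_one (p : ℝ) (hp : 0 < p) (hq : ∃ q : ℕ, (q : ℝ) = 2 / p)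
    (ω φ : ℝ) (hω : 0 ≤ ω) (hφ : φ ∈ Set.Ico 0 (2 * Real.pi)) (r : ℝ) (hr : 0 ≤ r) :
    (∫ τ in (0 : ℝ)..r, τ * calJ p 0 φ τ) = r * calJ p 1 φ r := by
  obtain ⟨q, hqe⟩ := hq
  have hq0 : (0:ℝ) < (q:ℝ) := by rw [hqe]; positivity
  have hq1 : (1:ℝ) ≤ (q:ℝ) := by
    have : 1 ≤ q := by exact_mod_cast Nat.one_le_iff_ne_zero.mpr (by
      intro h; rw [h] at hq0; simp at hq0)
    exact_mod_cast this
  have hp2 : p ≤ 2 := by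
    rw [hqe] at hq1
    rw [le_div_iff₀ hp] at hq1
    linarith
  have hp0 : p ≠ 0 := hp.ne'
  set C : ℝ := (2 / p) ^ 2 / Real.Gamma (1 / p) ^ 2 with hC
  have hC0 : 0 ≤ C := by positivity
  have hGpos : ∀ k : ℕ, 0 < Real.Gamma ((2/p) * ((k:ℝ)+1)) := fun k =>
    Real.Gamma_pos_of_pos (by positivity)
  set c : ℕ → ℝ := fun k => C * ((-1)^k / Real.Gamma ((2/p) * ((k:ℝ)+1))) * Sk p φ k with hc
  -- Step A : pointwise series expansion of the integrand
  have hA : ∀ τ : ℝ, τ * calJ p 0 φ τ = ∑' k : ℕ, c k * τ^(2*k+1) := by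
    intro τ
    have e0 : calJ p 0 φ τ = C * ∑' k : ℕ,
        (p ^ (2 * k) * (-1 : ℝ) ^ k / Real.Gamma ((2 / p) * ((k : ℝ) + 1) + 0)) *
          (τ / p) ^ (2 * (k : ℝ) + 0) * Sk p φ k := rfl
    rw [e0, ← tsum_mul_left, ← tsum_mul_left]
    refine tsum_congr fun k => ?_
    have he : (2 * (k : ℝ) + 0) = ((2*k : ℕ) : ℝ) := by push_cast; ring
    rw [he, Real.rpow_natCast, add_zero, div_pow]
    have hΓ : Real.Gamma ((2/p) * ((k:ℝ)+1)) ≠ 0 := (hGpos k).ne'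
    have hpk : (p:ℝ)^(2*k) ≠ 0 := pow_ne_zero _ hp0
    simp only [hc]
    generalize Real.Gamma ((2/p) * ((k:ℝ)+1)) = G at hΓ ⊢
    field_simp
    ring
  -- Step B/C : swap the integral and the sum
  have hInt : ∀ k : ℕ, MeasureTheory.Integrable (fun τ => c k * τ^(2*k+1))
      (MeasureTheory.volume.restrict (Set.Ioc 0 r)) := by
    intro k
    exact ((continuous_const.mul (continuous_pow (2*k+1))).intervalIntegrable 0 r).def' |>.mono_set
      (by rw [Set.uIoc_of_le hr])
  set f : ℕ → ℝ := fun k => (Nat.factorial (2*k) : ℝ) with hf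
  have hfpos : ∀ k, (0:ℝ) < f k := fun k => by
    simp only [hf]; exact_mod_cast Nat.factorial_pos _
  set K : ℝ := C * (4*((2/p)+1)^2) * (r+1)^2 with hK
  set d : ℕ → ℝ := fun k => K * ((4*(r+1))^(2*k) / f k) with hd
  have hbound : ∀ k : ℕ, (∫ τ in Set.Ioc 0 r, ‖c k * τ^(2*k+1)‖) ≤ |c k| * r^(2*k+2) := by
    intro k
    have hmeas : MeasureTheory.volume (Set.Ioc (0:ℝ) r) < ⊤ := by
      rw [Real.volume_Ioc]; exact ENNReal.ofReal_lt_top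
    have hconst : MeasureTheory.IntegrableOn (fun _ : ℝ => |c k| * r^(2*k+1)) (Set.Ioc 0 r) :=
      MeasureTheory.integrableOn_const hmeas.ne
    have hptw : ∀ τ ∈ Set.Ioc (0:ℝ) r, ‖c k * τ^(2*k+1)‖ ≤ |c k| * r^(2*k+1) := by
      intro τ hτ
      rw [norm_mul, norm_pow, Real.norm_eq_abs, Real.norm_eq_abs]
      have : |τ| ^ (2*k+1) ≤ r ^ (2*k+1) := by
        apply pow_le_pow_left₀ (abs_nonneg _)
        rw [abs_of_pos hτ.1]; exact hτ.2
      exact mul_le_mul_of_nonneg_left this (abs_nonneg _)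
    calc (∫ τ in Set.Ioc 0 r, ‖c k * τ^(2*k+1)‖)
        ≤ ∫ _ in Set.Ioc (0:ℝ) r, |c k| * r^(2*k+1) :=
          MeasureTheory.setIntegral_mono_on ((hInt k).norm) hconst measurableSet_Ioc hptw
      _ = (r - 0) * (|c k| * r^(2*k+1)) := by
          rw [MeasureTheory.setIntegral_const, Real.volume_real_Ioc_of_le hr, smul_eq_mul]
      _ = |c k| * r^(2*k+2) := by ring
  have hck : ∀ k : ℕ, |c k| ≤ C * (4*((2/p)*((k:ℝ)+1)+1)*((2/p)*((k:ℝ)+1))) * (4^k / f k) := by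
    intro k
    have hSnn := Sk_nonneg hp φ k
    have hSle := Sk_le hp hp2 φ k
    have : |c k| = C * (1 / Real.Gamma ((2/p) * ((k:ℝ)+1))) * Sk p φ k := by
      simp only [hc]
      have habs : |((-1:ℝ))^k / Real.Gamma ((2/p) * ((k:ℝ)+1))|
          = 1 / Real.Gamma ((2/p) * ((k:ℝ)+1)) := by
        rw [abs_div, abs_pow, abs_neg, abs_one, one_pow, abs_of_pos (hGpos k)]
      rw [abs_mul, abs_mul, habs, abs_of_nonneg hC0, abs_of_nonneg hSnn]
    rw [this]
    have hG := hGpos k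
    calc C * (1 / Real.Gamma ((2/p) * ((k:ℝ)+1))) * Sk p φ k
        ≤ C * (1 / Real.Gamma ((2/p) * ((k:ℝ)+1))) *
          (4*((2/p)*((k:ℝ)+1)+1)*((2/p)*((k:ℝ)+1)) * Real.Gamma ((2/p)*((k:ℝ)+1))
            * (4^k / f k)) := by
          apply mul_le_mul_of_nonneg_left hSle (by positivity)
      _ = C * (4*((2/p)*((k:ℝ)+1)+1)*((2/p)*((k:ℝ)+1))) * (4^k / f k) := by
          field_simp
  have hd2 : ∀ k : ℕ, |c k| * r^(2*k+2) ≤ d k := by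
    intro k
    have hQ : (0:ℝ) < 2/p := by positivity
    have hk1 : (1:ℝ) ≤ (k:ℝ)+1 := by
      have := Nat.cast_nonneg (α := ℝ) k; linarith
    have hA' : 4*((2/p)*((k:ℝ)+1)+1)*((2/p)*((k:ℝ)+1)) ≤ 4*((2/p)+1)^2*4^k := by
      have h1 := sq_succ_le_four_pow k
      nlinarith [mul_pos hQ (lt_of_lt_of_le one_pos hk1), sq_nonneg ((k:ℝ)+1)]
    have e16 : ((4:ℝ)*(r+1))^(2*k) = 4^k * 4^k * (r+1)^(2*k) := by
      rw [mul_pow]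
      congr 1
      rw [pow_mul]
      norm_num
      rw [← mul_pow]
      norm_num
    calc |c k| * r^(2*k+2)
        ≤ (C * (4*((2/p)*((k:ℝ)+1)+1)*((2/p)*((k:ℝ)+1))) * (4^k / f k)) * r^(2*k+2) :=
          mul_le_mul_of_nonneg_right (hck k) (by positivity)
      _ ≤ (C * (4*((2/p)+1)^2*4^k) * (4^k / f k)) * ((r+1)^(2*k) * (r+1)^2) := by
          apply mul_le_mul ?_ ?_ (by positivity) (by positivity)
          · apply mul_le_mul_of_nonneg_right ?_ (by positivity)
            exact mul_le_mul_of_nonneg_left hA' hC0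
          · have e : r^(2*k+2) = r^(2*k) * r^2 := by ring
            rw [e]
            apply mul_le_mul ?_ ?_ (by positivity) (by positivity)
            · exact pow_le_pow_left₀ hr (by linarith) _
            · exact pow_le_pow_left₀ hr (by linarith) _
      _ = d k := by
          simp only [hd, hK, e16]
          field_simp
  have hsumd : Summable d := by
    simpa only [hd, hf] using (summable_even_exp (4*(r+1))).mul_left K
  have hSum : Summable fun k : ℕ => ∫ τ in Set.Ioc 0 r, ‖c k * τ^(2*k+1)‖ := by
    apply Summable.of_nonneg_of_le
      (fun k => MeasureTheory.integral_nonneg fun τ => norm_nonneg _)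
      (fun k => (hbound k).trans (hd2 k)) hsumd
  have hswap := MeasureTheory.integral_tsum_of_summable_integral_norm hInt hSum
  have hfun : (fun τ => τ * calJ p 0 φ τ) = fun τ => ∑' k : ℕ, c k * τ^(2*k+1) := funext hA
  rw [intervalIntegral.integral_of_le hr, hfun, ← hswap]
  -- now compute each integral and match with the RHS series
  have e1 : calJ p 1 φ r = C * ∑' k : ℕ,
      (p ^ (2 * k) * (-1 : ℝ) ^ k / Real.Gamma ((2 / p) * ((k : ℝ) + 1) + 1)) *
        (r / p) ^ (2 * (k : ℝ) + 1) * Sk p φ k := rfl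
  rw [e1, ← tsum_mul_left, ← tsum_mul_left]
  refine tsum_congr fun k => ?_
  rw [← intervalIntegral.integral_of_le hr, intervalIntegral.integral_const_mul,
    integral_pow]
  have he : (2 * (k : ℝ) + 1) = ((2*k+1 : ℕ) : ℝ) := by push_cast; ring
  have hne : (2/p)*((k:ℝ)+1) ≠ 0 := by positivity
  rw [he, Real.rpow_natCast, div_pow, Real.Gamma_add_one hne]
  simp only [hc]
  have hΓ : Real.Gamma ((2/p) * ((k:ℝ)+1)) ≠ 0 := (hGpos k).ne'
  have hpk : (p:ℝ)^(2*k+1) ≠ 0 := pow_ne_zero _ hp0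
  rw [zero_pow (by omega), sub_zero]
  generalize Real.Gamma ((2/p) * ((k:ℝ)+1)) = G at hΓ ⊢
  push_cast
  field_simp
  ring
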